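/- Let G be a simplicial group, α = (i_l,…,i_1) and β = (j_m,…,j_1) elements of S(n) with α ∩ β = ∅ and β < α (so i_1 < j_1), and let x ∈ NG_{n−#α}, y ∈ NG_{n−#β}. Set v = [s_α x, s_β y] ∈ G_n. Then for every k with 0 ≤ k ≤ i_1, one has p_k(v) = v, where p_k(z) = z·s_k d_k(z)^{-1}. -/

import Mathlib

/-- A simplicial group: groups `G n` with face maps `d n i : G (n+1) →* G n`
and degeneracies `s n i : G n →* G (n+1)` satisfying the simplicial identities
(asserted in the meaningful index ranges). -/
structure SGrp where
  G : ℕ → Type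
  grp : ∀ n, Group (G n)
  d : (n : ℕ) → ℕ → (G (n+1) →* G n)
  s : (n : ℕ) → ℕ → (G n →* G (n+1))
  dd : ∀ n i j, i < j → j ≤ n + 2 → ∀ x,
    d n i (d (n+1) j x) = d n (j-1) (d (n+1) i x)
  ds_lt : ∀ n i j, i < j → j ≤ n + 1 → ∀ x,
    d (n+1) i (s (n+1) j x) = s n (j-1) (d n i x)
  ds_eq : ∀ n j, j ≤ n → ∀ x, d n j (s n j x) = x
  ds_succ : ∀ n j, j ≤ n → ∀ x, d n (j+1) (s n j x) = x
  ds_gt : ∀ n i j, j + 1 < i → i ≤ n + 2 → ∀ x,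
    d (n+1) i (s (n+1) j x) = s n j (d n (i-1) x)
  ss : ∀ n i j, i ≤ j → j ≤ n → ∀ x,
    s (n+1) i (s n j x) = s (n+1) (j+1) (s n i x)

attribute [instance] SGrp.grp

/-- Moore complex: `NG 0 = G 0`, `NG (n+1) = ⋂_{i ≤ n} ker (d_i)`. -/
def SGrp.NG (X : SGrp) : (n : ℕ) → Subgroup (X.G n)
  | 0 => ⊤
  | (n+1) => ⨅ i ∈ Finset.range (n+1), (X.d n i).ker

/-- Transport along an equality of dimensions. -/
def SGrp.castHom (X : SGrp) {a b : ℕ} (h : a = b) : X.G a →* X.G b where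
  toFun x := h ▸ x
  map_one' := by subst h; rfl
  map_mul' x y := by subst h; rfl

/-- Composite degeneracy `s_α = s_{i_l} ⋯ s_{i_1}` for `α = [i_l, …, i_1]`
(head applied last). -/
def SGrp.sComp (X : SGrp) : (m : ℕ) → (α : List ℕ) → (X.G m →* X.G (m + α.length))
  | _, [] => MonoidHom.id _
  | m, i :: rest => (X.s (m + rest.length) i).comp (X.sComp m rest)

/-- `s_α : G_{n-#α} →* G_n` for `α ∈ S(n)` (the trivial hom if lengths mismatch). -/
def SGrp.sMapN (X : SGrp) (n : ℕ) (α : List ℕ) : X.G (n - α.length) →* X.G n :=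
  if h : n - α.length + α.length = n then
    (X.castHom h).comp (X.sComp (n - α.length) α) else 1

/-- `p_j(z) = z ⬝ (s_j d_j z)⁻¹` on `G (n+1)`. -/
def SGrp.p (X : SGrp) (n j : ℕ) (z : X.G (n+1)) : X.G (n+1) :=
  z * (X.s n j (X.d n j z))⁻¹

/-- `pComp n j = p_j ∘ ⋯ ∘ p_0` on `G (n+1)`. -/
def SGrp.pComp (X : SGrp) (n : ℕ) : ℕ → X.G (n+1) → X.G (n+1)
  | 0 => X.p n 0
  | (j+1) => fun z => X.p n (j+1) (X.pComp n j z)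

/-- `pComp1 n l = p_l ∘ ⋯ ∘ p_1` on `G (n+1)` (identity for `l = 0`). -/
def SGrp.pComp1 (X : SGrp) (n : ℕ) : ℕ → X.G (n+1) → X.G (n+1)
  | 0 => id
  | (j+1) => fun z => X.p n (j+1) (X.pComp1 n j z)

/-- The ordering of `S(n)` from the paper: `α < β` iff comparing from the
smallest indices (the reversed lists), either the first difference has the
index of `α` larger, or `α`'s indices (from the small end) form a proper
prefix of `β`'s. -/
def Slt (α β : List ℕ) : Prop := List.Lex (· > ·) α.reverse β.reverse

/-- `α` represents a nonidentity element of `S(N)`: a nonempty strictly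
decreasing tuple of indices `< N`. -/
def SIdx (N : ℕ) (α : List ℕ) : Prop :=
  α ≠ [] ∧ α.Chain' (· > ·) ∧ α.length ≤ N ∧ ∀ i ∈ α, i < N

section Aux

lemma SGrp.ds_lt'' (X : SGrp) (N i j : ℕ) (hij : i < j) (hj : j ≤ N) (x : X.G N) :
    X.d N i (X.s N j x) =
      X.castHom (by omega : N - 1 + 1 = N)
        (X.s (N-1) (j-1) (X.d (N-1) i (X.castHom (by omega : N = N - 1 + 1) x))) := by
  obtain ⟨N', rfl⟩ : ∃ N', N = N' + 1 := ⟨N - 1, by omega⟩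
  exact X.ds_lt N' i j hij hj x

lemma SGrp.NG_d (X : SGrp) (m m' k : ℕ) (e : m = m' + 1) (y : X.G m)
    (hy : y ∈ X.NG m) (hkm : k ≤ m') : X.d m' k (X.castHom e y) = 1 := by
  subst e
  have h : y ∈ ⨅ i ∈ Finset.range (m' + 1), (X.d m' i).ker := hy
  simp only [Subgroup.mem_iInf, MonoidHom.mem_ker, Finset.mem_range] at h
  exact h k (by omega)

lemma SGrp.aux (X : SGrp) (k : ℕ) (L : List ℕ) : ∀ (m : ℕ), 1 ≤ m →
    L.Chain' (· > ·) →
    ∀ (y : X.G m),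
    (∀ i ∈ L, k < i ∧ i + 1 ≤ m + L.length) →
    (∀ m' (e : m = m' + 1), X.d m' k (X.castHom e y) = 1) →
    ∀ N (h : m + L.length = N + 1), X.d N k (X.castHom h (X.sComp m L y)) = 1 := by
  induction L with
  | nil =>
    intro m _ _ y _ hy N h
    exact hy N h
  | cons i rest ih =>
    intro m hm hc y hcond hy N h
    have hN : N = m + rest.length := by
      have : m + (rest.length + 1) = N + 1 := h
      omega
    subst hN
    show X.d (m + rest.length) k
      (X.s (m + rest.length) i (X.sComp m rest y)) = 1
    have hki : k < i := (hcond i (by simp)).1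
    have hi : i ≤ m + rest.length := by
      have := (hcond i (by simp)).2
      simpa using by omega
    rw [X.ds_lt'' (m + rest.length) k i hki hi]
    have hrest : ∀ j ∈ rest, j < i := by
      have hp : List.Pairwise (· > ·) (i :: rest) :=
        List.isChain_iff_pairwise.mp hc
      exact fun j hj => (List.pairwise_cons.mp hp).1 j hj
    have hdw := ih m hm hc.tail y
      (fun j hj => ⟨(hcond j (by simp [hj])).1, by
        have := hrest j hj
        have := (hcond i (by simp)).2
        omega⟩) hy
    rw [hdw (m + rest.length - 1) (by omega)]
    simp

lemma SGrp.aux2 (k : ℕ) : ∀ (L : List ℕ) (n : ℕ), L.Chain' (· > ·) →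
    (∀ i ∈ L, k < i ∧ i ≤ n) → L ≠ [] → k + L.length ≤ n := by
  intro L
  induction L with
  | nil => intro n _ _ hne; exact absurd rfl hne
  | cons j rest ih =>
    intro n hc hcond _
    have hj : k < j ∧ j ≤ n := hcond j (by simp)
    rcases eq_or_ne rest [] with rfl | hne
    · simp; omega
    · have hrest : ∀ i ∈ rest, i < j := by
        have hp : List.Pairwise (· > ·) (j :: rest) :=
          List.isChain_iff_pairwise.mp hc
        exact fun i hi => (List.pairwise_cons.mp hp).1 i hi
      have := ih (n - 1) hc.tail
        (fun i hi => ⟨(hcond i (by simp [hi])).1, by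
          have := hrest i hi; omega⟩) hne
      simp only [List.length_cons]
      omega

/-- last element of a strictly decreasing list is minimal -/
lemma SGrp.last_min (L : List ℕ) (a : ℕ) (t : List ℕ) (hr : L.reverse = a :: t)
    (hc : L.Chain' (· > ·)) : ∀ j ∈ L, a ≤ j := by
  have hcr : L.reverse.Chain' (· < ·) := by
    exact List.isChain_reverse.mpr hc
  rw [hr] at hcr
  have hp : List.Pairwise (· < ·) (a :: t) :=
    List.isChain_iff_pairwise.mp hcr
  intro j hj
  have hmem : j ∈ a :: t := by
    rw [← hr]
    exact List.mem_reverse.mpr hj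
  rcases List.mem_cons.mp hmem with rfl | hjt
  · exact le_refl j
  · exact le_of_lt ((List.pairwise_cons.mp hp).1 j hjt)

end Aux

open scoped commutatorElement

/-- Lemma 3.1(i). For disjoint `α, β ∈ S(n)` with `β < α`,
`x ∈ NG_{n-#α}`, `y ∈ NG_{n-#β}`, `v = [s_α x, s_β y]`, and any `k ≤ i₁`
(i.e. `k` at most every index of `α`, `i₁` being the smallest), `p_k(v) = v`.
(Stated at level `n+1` so that the `p_k` are defined.) -/
theorem stmt7 (X : SGrp) (n : ℕ) (α β : List ℕ)
    (hα : SIdx (n+1) α) (hβ : SIdx (n+1) β)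
    (hdisj : ∀ i ∈ α, i ∉ β) (hlt : Slt β α)
    (x : X.G (n+1 - α.length)) (y : X.G (n+1 - β.length))
    (hx : x ∈ X.NG (n+1 - α.length)) (hy : y ∈ X.NG (n+1 - β.length))
    (k : ℕ) (hk : ∀ i ∈ α, k ≤ i) :
    X.p n k ⁅X.sMapN (n+1) α x, X.sMapN (n+1) β y⁆ =
      ⁅X.sMapN (n+1) α x, X.sMapN (n+1) β y⁆ := by
  classical
  obtain ⟨j1, βt, hβr⟩ : ∃ a t, β.reverse = a :: t := by
    cases h : β.reverse with
    | nil => exact absurd (by simpa using congrArg List.reverse h) hβ.1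
    | cons a t => exact ⟨a, t, rfl⟩
  obtain ⟨i1, αt, hαr⟩ : ∃ a t, α.reverse = a :: t := by
    cases h : α.reverse with
    | nil => exact absurd (by simpa using congrArg List.reverse h) hα.1
    | cons a t => exact ⟨a, t, rfl⟩
  have hi1α : i1 ∈ α := by
    rw [← List.mem_reverse, hαr]; exact List.mem_cons_self
  have hj1β : j1 ∈ β := by
    rw [← List.mem_reverse, hβr]; exact List.mem_cons_self
  -- k < j1
  have hkj1 : k < j1 := by
    unfold Slt at hlt
    rw [hβr, hαr] at hlt
    cases hlt with
    | cons h' => exact absurd hj1β (hdisj j1 hi1α)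
    | rel h' =>
      have := hk i1 hi1α
      omega
  have hkβ : ∀ j ∈ β, k < j :=
    fun j hj => lt_of_lt_of_le hkj1 (SGrp.last_min β j1 βt hβr hβ.2.1 j hj)
  -- cardinality bound
  have hcard : k + β.length ≤ n :=
    SGrp.aux2 k β n hβ.2.1
      (fun i hi => ⟨hkβ i hi, by have := hβ.2.2.2 i hi; omega⟩) hβ.1
  have hβlen : β.length ≤ n + 1 := hβ.2.2.1
  -- d n k of the β part is 1
  have hlen : n + 1 - β.length + β.length = n + 1 := by omega
  have hB : X.d n k (X.sMapN (n+1) β y) = 1 := by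
    unfold SGrp.sMapN
    rw [dif_pos hlen]
    exact X.aux k β (n + 1 - β.length) (by omega) hβ.2.1 y
      (fun i hi => ⟨hkβ i hi, by have := hβ.2.2.2 i hi; omega⟩)
      (fun m' e => X.NG_d _ m' k e y hy (by omega)) n hlen
  have hv : X.d n k ⁅X.sMapN (n+1) α x, X.sMapN (n+1) β y⁆ = 1 := by
    rw [map_commutatorElement, hB]
    simp
  unfold SGrp.p
  rw [hv]
  simp
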